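/- Let k ≥ 1 be an integer and let G and H be finite simple graphs admitting a bijection Φ between their vertex sets such that for every vertex v of G, the k-hop neighborhood of v in G is isomorphic to the k-hop neighborhood of Φ(v) in H via an isomorphism sending v to Φ(v). Then for every finite simple graph K with at most k edges and no isolated vertices, #(K:G) = #(K:H). -/

import Mathlib

open SimpleGraph

/-- The subgraph of `G` consisting of the edges in `U` together with their endpoints. -/
def edgeSubgraph {V : Type*} (G : SimpleGraph V) (U : Set (Sym2 V)) : G.Subgraph where
  verts := {v | ∃ w, G.Adj v w ∧ s(v, w) ∈ U}
  Adj v w := G.Adj v w ∧ s(v, w) ∈ U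
  adj_sub h := h.1
  edge_vert h := ⟨_, h⟩
  symm := ⟨fun v w h => ⟨h.1.symm, by rw [Sym2.eq_swap]; exact h.2⟩⟩

/-- `#(K : G)`: the number of edge subsets `U ⊆ E(G)` such that the graph consisting of the
edges of `U` together with their endpoints is isomorphic to `K`. -/
noncomputable def subgraphCount {W V : Type*} (K : SimpleGraph W) (G : SimpleGraph V) : ℕ :=
  {U : Set (Sym2 V) | U ⊆ G.edgeSet ∧ Nonempty ((edgeSubgraph G U).coe ≃g K)}.ncard
/-- The set of vertices of `G` at distance at most `k` from `v`.  The `k`-hop neighborhood of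
`v` is the subgraph of `G` induced by this set. -/
def ball {V : Type*} (G : SimpleGraph V) (v : V) (k : ℕ) : Set V :=
  {w | G.Reachable v w ∧ G.dist v w ≤ k}

lemma mem_ball_self {V : Type*} (G : SimpleGraph V) (v : V) (k : ℕ) :
    v ∈ _root_.ball G v k := by
  refine ⟨Reachable.refl v, ?_⟩
  rw [SimpleGraph.dist_self]
  exact Nat.zero_le k

namespace Hop

variable {α β γ δ : Type*}

@[simp] lemma edgeSubgraph_adj {G : SimpleGraph α} {U : Set (Sym2 α)} {x y : α} :
    (edgeSubgraph G U).Adj x y ↔ G.Adj x y ∧ s(x, y) ∈ U := Iff.rfl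

@[simp] lemma edgeSubgraph_verts {G : SimpleGraph α} {U : Set (Sym2 α)} {v : α} :
    v ∈ (edgeSubgraph G U).verts ↔ ∃ w, G.Adj v w ∧ s(v, w) ∈ U := Iff.rfl

/-- Push a set of edges along a map of vertex types. -/
def push (f : α → β) (U : Set (Sym2 α)) : Set (Sym2 β) := Sym2.map f '' U

lemma mem_push_iff {f : α → β} (hf : Function.Injective f) {U : Set (Sym2 α)} (z : Sym2 α) :
    Sym2.map f z ∈ push f U ↔ z ∈ U := by
  constructor
  · rintro ⟨w, hw, hww⟩
    rwa [← Sym2.map.injective hf hww]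
  · exact fun h => ⟨z, h, rfl⟩

lemma push_injective {f : α → β} (hf : Function.Injective f) :
    Function.Injective (push f) :=
  Set.image_injective.mpr (Sym2.map.injective hf)

lemma push_union (f : α → β) (U U' : Set (Sym2 α)) :
    push f (U ∪ U') = push f U ∪ push f U' := Set.image_union _ _ _

lemma push_push (f : β → γ) (g : α → β) (U : Set (Sym2 α)) :
    push f (push g U) = push (f ∘ g) U := by
  rw [push, push, push, ← Set.image_comp, ← Sym2.map_comp]

lemma push_id (U : Set (Sym2 α)) : push (id : α → α) U = U := by
  simp [push, Sym2.map_id]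

variable {A : SimpleGraph α} {B : SimpleGraph β}

lemma push_subset_edgeSet (e : A →g B) {U : Set (Sym2 α)} (hU : U ⊆ A.edgeSet) :
    push e U ⊆ B.edgeSet := by
  rintro z ⟨w, hw, rfl⟩
  induction w with
  | _ x y =>
      rw [Sym2.map_pair_eq, SimpleGraph.mem_edgeSet]
      exact e.map_adj (hU hw)

lemma mem_verts_push (e : A →g B) (he : Function.Injective e) {U : Set (Sym2 α)}
    (hU : U ⊆ A.edgeSet) {v : β} :
    v ∈ (edgeSubgraph B (push e U)).verts ↔ ∃ x ∈ (edgeSubgraph A U).verts, e x = v := by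
  constructor
  · rintro ⟨w, hadj, z, hz, hmap⟩
    induction z with
    | _ x y =>
        rw [Sym2.map_pair_eq, Sym2.eq_iff] at hmap
        have hxy : A.Adj x y := hU hz
        rcases hmap with ⟨h1, _⟩ | ⟨_, h2⟩
        · exact ⟨x, ⟨y, hxy, hz⟩, h1⟩
        · exact ⟨y, ⟨x, hxy.symm, by rwa [Sym2.eq_swap]⟩, h2⟩
  · rintro ⟨x, ⟨y, hxy, hmem⟩, rfl⟩
    exact ⟨e y, e.map_adj hxy, ⟨s(x, y), hmem, Sym2.map_pair_eq _ _ _⟩⟩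

lemma adj_push (e : A →g B) (he : Function.Injective e) {U : Set (Sym2 α)}
    (hU : U ⊆ A.edgeSet) (x y : α) :
    (edgeSubgraph B (push e U)).Adj (e x) (e y) ↔ (edgeSubgraph A U).Adj x y := by
  rw [edgeSubgraph_adj, edgeSubgraph_adj]
  have hmem : s(e x, e y) ∈ push e U ↔ s(x, y) ∈ U := by
    rw [← Sym2.map_pair_eq]; exact mem_push_iff he _
  constructor
  · rintro ⟨-, h2⟩
    have := hmem.mp h2
    exact ⟨hU this, this⟩
  · rintro ⟨h1, h2⟩
    exact ⟨e.map_adj h1, hmem.mpr h2⟩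

/-- The isomorphism between the edge subgraph on `U` and the edge subgraph on its push. -/
noncomputable def pushIso (e : A →g B) (he : Function.Injective e) {U : Set (Sym2 α)}
    (hU : U ⊆ A.edgeSet) :
    (edgeSubgraph A U).coe ≃g (edgeSubgraph B (push e U)).coe := by
  have hbij : Function.Bijective
      (fun x : (edgeSubgraph A U).verts =>
        (⟨e x, (mem_verts_push e he hU).mpr ⟨x, x.2, rfl⟩⟩ : (edgeSubgraph B (push e U)).verts)) := by
    constructor
    · intro a b hab
      exact Subtype.ext (he (congrArg Subtype.val hab))
    · rintro ⟨v, hv⟩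
      obtain ⟨x, hx, rfl⟩ := (mem_verts_push e he hU).mp hv
      exact ⟨⟨x, hx⟩, rfl⟩
  refine ⟨Equiv.ofBijective _ hbij, ?_⟩
  intro a b
  simp only [Equiv.ofBijective_apply, Subgraph.coe_adj]
  exact adj_push e he hU a b

lemma pushIso_apply (e : A →g B) (he : Function.Injective e) {U : Set (Sym2 α)}
    (hU : U ⊆ A.edgeSet) (x : (edgeSubgraph A U).verts) :
    ((pushIso e he hU x : (edgeSubgraph B (push e U)).verts) : β) = e x := rfl

lemma exists_push_eq (e : A →g B) {S : Set (Sym2 β)}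
    (hrange : ∀ ⦃v w : β⦄, s(v, w) ∈ S → v ∈ Set.range e)
    (hpull : ∀ ⦃x y : α⦄, s(e x, e y) ∈ S → A.Adj x y) :
    ∃ U, U ⊆ A.edgeSet ∧ push e U = S := by
  refine ⟨Sym2.map e ⁻¹' S, ?_, ?_⟩
  · intro z hz
    induction z with
    | _ x y =>
        have : Sym2.map e s(x,y) ∈ S := hz
        rw [Sym2.map_pair_eq] at this
        exact (SimpleGraph.mem_edgeSet _).mpr (hpull this)
  · rw [push, Set.image_preimage_eq_inter_range, Set.inter_eq_left]
    intro z hz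
    induction z with
    | _ v w =>
        obtain ⟨x, hx⟩ := hrange hz
        have hz' : s(w, v) ∈ S := by rwa [Sym2.eq_swap]
        obtain ⟨y, hy⟩ := hrange hz'
        exact ⟨s(x, y), by rw [Sym2.map_pair_eq, hx, hy]⟩

lemma push_edgeSet_of_iso (e : A ≃g B) : push e A.edgeSet = B.edgeSet := by
  apply Set.Subset.antisymm (push_subset_edgeSet e.toHom (fun z h => h))
  intro z hz
  induction z with
  | _ v w =>
      refine ⟨s(e.symm v, e.symm w), ?_, by rw [Sym2.map_pair_eq]; simp⟩
      rw [SimpleGraph.mem_edgeSet] at hz ⊢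
      simpa using e.symm.toHom.map_adj hz


/-- The set of copies of `K` in `G`, as edge sets. -/
def copies (K : SimpleGraph γ) (G : SimpleGraph α) : Set (Set (Sym2 α)) :=
  {U | U ⊆ G.edgeSet ∧ Nonempty ((edgeSubgraph G U).coe ≃g K)}

lemma subgraphCount_eq_card (K : SimpleGraph γ) (G : SimpleGraph α) :
    subgraphCount K G = Nat.card (copies K G) := by
  rw [subgraphCount, ← Nat.card_coe_set_eq]; rfl

lemma copies_congr {K : SimpleGraph γ} {K' : SimpleGraph δ} (ψ : K ≃g K') (G : SimpleGraph α) :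
    copies K G = copies K' G := by
  ext U
  exact and_congr_right fun _ =>
    ⟨fun ⟨φ⟩ => ⟨φ.trans ψ⟩, fun ⟨φ⟩ => ⟨φ.trans ψ.symm⟩⟩

/-- Transport an isomorphism of `edgeSubgraph`s along an equality of edge sets. -/
def isoOfEq {G : SimpleGraph α} {U U' : Set (Sym2 α)} (h : U = U') :
    (edgeSubgraph G U).coe ≃g (edgeSubgraph G U').coe := by subst h; exact Iso.refl

lemma push_mem_copies {K : SimpleGraph γ} (e : A →g B) (he : Function.Injective e)
    {U : Set (Sym2 α)} (hU : U ∈ copies K A) : push e U ∈ copies K B := by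
  obtain ⟨φ⟩ := hU.2
  exact ⟨push_subset_edgeSet e hU.1, ⟨(pushIso e he hU.1).symm.trans φ⟩⟩

lemma push_val_coe_edgeSet {G : SimpleGraph α} {U : Set (Sym2 α)} (hU : U ⊆ G.edgeSet) :
    push (Subtype.val : (edgeSubgraph G U).verts → α) (edgeSubgraph G U).coe.edgeSet = U := by
  apply Set.Subset.antisymm
  · rintro z ⟨w, hw, rfl⟩
    induction w with
    | _ a b =>
        rw [SimpleGraph.mem_edgeSet, Subgraph.coe_adj] at hw
        rw [Sym2.map_pair_eq]
        exact hw.2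
  · intro u hu
    have hu' := hU hu
    induction u with
    | _ x y =>
        rw [SimpleGraph.mem_edgeSet] at hu'
        have hx : x ∈ (edgeSubgraph G U).verts := ⟨y, hu', hu⟩
        have hy : y ∈ (edgeSubgraph G U).verts := ⟨x, hu'.symm, by rwa [Sym2.eq_swap]⟩
        refine ⟨s(⟨x, hx⟩, ⟨y, hy⟩), ?_, by rw [Sym2.map_pair_eq]⟩
        rw [SimpleGraph.mem_edgeSet, Subgraph.coe_adj]
        exact ⟨hu', hu⟩

lemma card_coe_edgeSet {G : SimpleGraph α} {U : Set (Sym2 α)} (hU : U ⊆ G.edgeSet) :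
    Nat.card (edgeSubgraph G U).coe.edgeSet = Nat.card U := by
  conv_rhs => rw [← push_val_coe_edgeSet hU]
  rw [Nat.card_coe_set_eq, Nat.card_coe_set_eq, push,
    Set.ncard_image_of_injective _ (Sym2.map.injective Subtype.val_injective)]

lemma ncard_copy {K : SimpleGraph γ} {G : SimpleGraph α} {U : Set (Sym2 α)}
    (hU : U ∈ copies K G) : U.ncard = K.edgeSet.ncard := by
  obtain ⟨φ⟩ := hU.2
  rw [← Nat.card_coe_set_eq, ← Nat.card_coe_set_eq, ← card_coe_edgeSet hU.1,
    Nat.card_congr φ.mapEdgeSet]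

lemma card_verts_copy {K : SimpleGraph γ} {G : SimpleGraph α} {U : Set (Sym2 α)}
    (hU : U ∈ copies K G) : Nat.card (edgeSubgraph G U).verts = Nat.card γ := by
  obtain ⟨φ⟩ := hU.2
  exact Nat.card_congr φ.toEquiv

lemma coe_no_isolated {G : SimpleGraph α} {U : Set (Sym2 α)}
    (x : (edgeSubgraph G U).verts) : ∃ y, (edgeSubgraph G U).coe.Adj x y := by
  obtain ⟨w, hadj, hmem⟩ := x.2
  have hw : w ∈ (edgeSubgraph G U).verts := ⟨x, hadj.symm, by rwa [Sym2.eq_swap]⟩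
  exact ⟨⟨w, hw⟩, by rw [Subgraph.coe_adj]; exact ⟨hadj, hmem⟩⟩

instance isEmpty_verts_empty {G : SimpleGraph α} :
    IsEmpty (edgeSubgraph G (∅ : Set (Sym2 α))).verts :=
  ⟨fun x => by obtain ⟨w, -, h⟩ := x.2; exact h⟩

lemma copies_of_isEmpty [IsEmpty γ] (K : SimpleGraph γ) (G : SimpleGraph α) :
    copies K G = {(∅ : Set (Sym2 α))} := by
  ext U
  simp only [Set.mem_singleton_iff]
  constructor
  · rintro ⟨hsub, ⟨φ⟩⟩
    rw [Set.eq_empty_iff_forall_notMem]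
    intro u hu
    have hu' := hsub hu
    induction u with
    | _ x y =>
        rw [SimpleGraph.mem_edgeSet] at hu'
        exact IsEmpty.false (φ ⟨x, ⟨y, hu', hu⟩⟩)
  · rintro rfl
    refine ⟨Set.empty_subset _, ⟨⟨Equiv.equivOfIsEmpty _ _, ?_⟩⟩⟩
    · intro a b
      exact isEmptyElim (α := γ) (Equiv.equivOfIsEmpty _ _ a)

/-- Copies of `K` containing the vertex `v`. -/
def copiesAt (K : SimpleGraph γ) (G : SimpleGraph α) (v : α) : Set (Set (Sym2 α)) :=
  {U | U ∈ copies K G ∧ v ∈ (edgeSubgraph G U).verts}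

/-- Transport of rooted copies along an injective graph homomorphism, provided every rooted
copy on the target side lies in the image. -/
noncomputable def copiesAtEquiv (K : SimpleGraph γ) (e : A →g B) (he : Function.Injective e)
    (a : α)
    (hrange : ∀ U ∈ copiesAt K B (e a), ∀ ⦃v w : β⦄, s(v, w) ∈ U → v ∈ Set.range e)
    (hpull : ∀ U ∈ copiesAt K B (e a), ∀ ⦃x y : α⦄, s(e x, e y) ∈ U → A.Adj x y) :
    copiesAt K A a ≃ copiesAt K B (e a) := by
  have hmem1 : ∀ U : copiesAt K A a, push e U.1 ∈ copiesAt K B (e a) := by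
    rintro ⟨U, hU, hv⟩
    exact ⟨push_mem_copies e he hU, (mem_verts_push e he hU.1).mpr ⟨a, hv, rfl⟩⟩
  refine Equiv.ofBijective (fun U => ⟨push e U.1, hmem1 U⟩) ⟨?_, ?_⟩
  · intro U U' h
    exact Subtype.ext (push_injective he (congrArg Subtype.val h))
  · rintro ⟨S, hS⟩
    obtain ⟨U, hUE, hpush⟩ := exists_push_eq e (hrange S hS) (hpull S hS)
    have hcopy : U ∈ copies K A := by
      obtain ⟨φ⟩ := hS.1.2
      exact ⟨hUE, ⟨(pushIso e he hUE).trans ((isoOfEq hpush).trans φ)⟩⟩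
    have hav : a ∈ (edgeSubgraph A U).verts := by
      have := hS.2
      rw [← hpush] at this
      obtain ⟨x, hx, hxa⟩ := (mem_verts_push e he hUE).mp this
      rwa [← he hxa]
    exact ⟨⟨U, hcopy, hav⟩, Subtype.ext hpush⟩


section ConnectedCase

lemma verts_subset_ball [Finite α] {G : SimpleGraph α} {K : SimpleGraph γ} (hK : K.Connected)
    {k : ℕ} (hKe : K.edgeSet.ncard ≤ k) {U : Set (Sym2 α)} (hU : U ∈ copies K G) {v w : α}
    (hv : v ∈ (edgeSubgraph G U).verts) (hw : w ∈ (edgeSubgraph G U).verts) :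
    w ∈ _root_.ball G v k := by
  classical
  obtain ⟨φ⟩ := hU.2
  have hconn : (edgeSubgraph G U).coe.Connected := φ.connected_iff.mpr hK
  obtain ⟨q⟩ := hconn.preconnected ⟨v, hv⟩ ⟨w, hw⟩
  set p := q.bypass with hpdef
  have hpath : p.IsPath := q.bypass_isPath
  have hfin : (edgeSubgraph G U).coe.edgeSet.Finite := Set.toFinite _
  have hlen : p.length ≤ k := by
    have h1 : p.edges.length = p.length := p.length_edges
    have hnd : p.edges.Nodup := hpath.isTrail.edges_nodup
    have h2 : p.edges.toFinset.card ≤ hfin.toFinset.card := by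
      apply Finset.card_le_card
      intro e he
      rw [Set.Finite.mem_toFinset]
      exact p.edges_subset_edgeSet (List.mem_toFinset.mp he)
    rw [List.toFinset_card_of_nodup hnd, h1] at h2
    refine h2.trans ?_
    rw [← Set.ncard_eq_toFinset_card _ hfin, ← Nat.card_coe_set_eq,
      card_coe_edgeSet hU.1, Nat.card_coe_set_eq, ncard_copy hU]
    exact hKe
  refine ⟨(p.map (edgeSubgraph G U).hom).reachable,
    le_trans (SimpleGraph.dist_le (p.map (edgeSubgraph G U).hom)) ?_⟩
  rw [SimpleGraph.Walk.length_map]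
  exact hlen

variable {V' W' : Type*}

/-- Rooted copies transported along a graph isomorphism. -/
noncomputable def copiesAtEquivOfIso {A : SimpleGraph V'} {B : SimpleGraph W'}
    (K : SimpleGraph γ) (ψ : A ≃g B) (a : V') :
    copiesAt K A a ≃ copiesAt K B (ψ a) := by
  refine copiesAtEquiv K ψ.toHom (ψ.toEquiv.injective) a ?_ ?_
  · intro U hU x y hxy
    exact ⟨ψ.symm x, ψ.apply_symm_apply x⟩
  · intro U hU x y hxy
    exact ψ.map_adj_iff.mp ((SimpleGraph.mem_edgeSet _).mp (hU.1.1 hxy))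

/-- Rooted copies of a connected small graph are the same as rooted copies in the ball. -/
noncomputable def copiesAtBallEquiv [Finite α] (G : SimpleGraph α) {K : SimpleGraph γ}
    (hK : K.Connected) {k : ℕ} (hKe : K.edgeSet.ncard ≤ k) (v : α) :
    copiesAt K (G.induce (_root_.ball G v k)) ⟨v, mem_ball_self G v k⟩ ≃ copiesAt K G v := by
  refine copiesAtEquiv K (SimpleGraph.Embedding.induce (G := G) (_root_.ball G v k)).toHom
      (fun a b h => Subtype.val_injective h) ⟨v, mem_ball_self G v k⟩ ?_ ?_
  · intro U hU x y hxy
    have hx : x ∈ (edgeSubgraph G U).verts :=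
      ⟨y, (SimpleGraph.mem_edgeSet _).mp (hU.1.1 hxy), hxy⟩
    have hb := verts_subset_ball hK hKe hU.1 hU.2 hx
    exact ⟨⟨x, hb⟩, rfl⟩
  · intro U hU x y hxy
    exact (SimpleGraph.mem_edgeSet _).mp (hU.1.1 hxy)

/-- The double-counting identity. -/
lemma sum_card_copiesAt [Fintype α] [Fintype γ] (K : SimpleGraph γ) (G : SimpleGraph α) :
    ∑ v : α, Nat.card (copiesAt K G v) = Nat.card (copies K G) * Fintype.card γ := by
  classical
  haveI : ∀ v : α, Fintype (copiesAt K G v) := fun v => Fintype.ofFinite _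
  haveI : Fintype (copies K G) := Fintype.ofFinite _
  haveI : ∀ U : copies K G, Fintype ((edgeSubgraph G U.1).verts) := fun U => Fintype.ofFinite _
  have hequiv : (Σ v : α, copiesAt K G v) ≃ (Σ U : copies K G, (edgeSubgraph G U.1).verts) :=
    { toFun := fun x => ⟨⟨x.2.1, x.2.2.1⟩, ⟨x.1, x.2.2.2⟩⟩
      invFun := fun y => ⟨y.2.1, ⟨y.1.1, y.1.2, y.2.2⟩⟩
      left_inv := fun x => rfl
      right_inv := fun y => rfl }
  calc ∑ v : α, Nat.card (copiesAt K G v)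
      = ∑ v : α, Fintype.card (copiesAt K G v) := by
        simp [Nat.card_eq_fintype_card]
    _ = Fintype.card (Σ U : copies K G, (edgeSubgraph G U.1).verts) := by
        rw [← Fintype.card_sigma, Fintype.card_congr hequiv]
    _ = ∑ U : copies K G, Fintype.card ((edgeSubgraph G U.1).verts) := Fintype.card_sigma
    _ = ∑ _U : copies K G, Fintype.card γ := by
        apply Finset.sum_congr rfl
        intro U _
        rw [← Nat.card_eq_fintype_card, ← Nat.card_eq_fintype_card]
        exact card_verts_copy U.2
    _ = Nat.card (copies K G) * Fintype.card γ := by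
        rw [Finset.sum_const, Finset.card_univ, smul_eq_mul, Nat.card_eq_fintype_card]

/-- The connected case of the main theorem. -/
lemma connected_case {V W : Type*} [Fintype V] [Fintype W]
    (G : SimpleGraph V) (H : SimpleGraph W) (k : ℕ) (Φ : V ≃ W)
    (hΦ : ∀ v : V,
      ∃ φ : (G.induce (_root_.ball G v k)) ≃g (H.induce (_root_.ball H (Φ v) k)),
        (φ ⟨v, mem_ball_self G v k⟩ : W) = Φ v)
    [Fintype γ] (K : SimpleGraph γ) (hK : K.Connected) (hKe : K.edgeSet.ncard ≤ k) :
    Nat.card (copies K G) = Nat.card (copies K H) := by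
  have hn : 0 < Fintype.card γ := Fintype.card_pos_iff.mpr hK.nonempty
  apply Nat.eq_of_mul_eq_mul_right hn
  rw [← sum_card_copiesAt, ← sum_card_copiesAt, ← Equiv.sum_comp Φ
    (fun w => Nat.card (copiesAt K H w))]
  apply Finset.sum_congr rfl
  intro v _
  obtain ⟨φ, hφ⟩ := hΦ v
  have h1 := (copiesAtBallEquiv G hK hKe v).symm
  have h2 := copiesAtEquivOfIso K φ (⟨v, mem_ball_self G v k⟩ : _root_.ball G v k)
  have hpt : φ ⟨v, mem_ball_self G v k⟩ = ⟨Φ v, mem_ball_self H (Φ v) k⟩ := Subtype.ext hφ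
  rw [hpt] at h2
  have h3 := copiesAtBallEquiv H hK hKe (Φ v)
  exact Nat.card_congr ((h1.trans h2).trans h3)

end ConnectedCase


section Components

lemma reachable_induce_of_walk {G : SimpleGraph α} {s : Set α} {u v : α}
    (p : G.Walk u v) (hp : ∀ x ∈ p.support, x ∈ s) (hu : u ∈ s) (hv : v ∈ s) :
    (G.induce s).Reachable ⟨u, hu⟩ ⟨v, hv⟩ := by
  induction p with
  | nil => exact Reachable.refl _
  | @cons a b c h p ih =>
      have hb : b ∈ s := hp b (by simp [SimpleGraph.Walk.support_cons])
      have hstep : (G.induce s).Adj ⟨a, hu⟩ ⟨b, hb⟩ := h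
      refine hstep.reachable.trans (ih ?_ hb hv)
      intro x hx
      exact hp x (by simp [SimpleGraph.Walk.support_cons, hx])

lemma mem_supp_of_mem_support {G : SimpleGraph α} {u v : α} (p : G.Walk u v)
    {x : α} (hx : x ∈ p.support) :
    G.connectedComponentMk x = G.connectedComponentMk u := by
  classical
  exact ConnectedComponent.eq.mpr ((p.takeUntil x hx).reachable.symm)

lemma connected_induce_supp {K : SimpleGraph γ} (c : K.ConnectedComponent) :
    (K.induce c.supp).Connected := by
  classical
  obtain ⟨v, hv⟩ := c.exists_rep
  rw [SimpleGraph.connected_iff]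
  refine ⟨?_, ⟨⟨v, by rw [ConnectedComponent.mem_supp_iff]; exact hv⟩⟩⟩
  · rintro ⟨x, hx⟩ ⟨y, hy⟩
    rw [ConnectedComponent.mem_supp_iff] at hx hy
    have hr : K.Reachable x y := ConnectedComponent.eq.mp (hx.trans hy.symm)
    obtain ⟨p⟩ := hr
    refine reachable_induce_of_walk p (fun z hz => ?_) _ _
    rw [ConnectedComponent.mem_supp_iff, mem_supp_of_mem_support p hz, hx]

/-- Components of the complement of a component's support. -/
noncomputable def compComplEquiv {K : SimpleGraph γ} (c₀ : K.ConnectedComponent) :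
    (K.induce c₀.suppᶜ).ConnectedComponent ≃ {c : K.ConnectedComponent // c ≠ c₀} := by
  have keymem : ∀ x : γ, x ∈ c₀.suppᶜ ↔ K.connectedComponentMk x ≠ c₀ := by
    intro x
    rw [Set.mem_compl_iff, ConnectedComponent.mem_supp_iff]
  refine
    { toFun := ConnectedComponent.lift
        (fun x => ⟨K.connectedComponentMk x.1, (keymem x.1).mp x.2⟩)
        (fun x y p _ =>
          Subtype.ext (ConnectedComponent.eq.mpr
            (p.reachable.map (SimpleGraph.Embedding.induce c₀.suppᶜ).toHom)))
      invFun := fun c =>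
        (K.induce c₀.suppᶜ).connectedComponentMk
          ⟨c.1.exists_rep.choose, (keymem _).mpr (by
            have h : K.connectedComponentMk c.1.exists_rep.choose = c.1 :=
              c.1.exists_rep.choose_spec
            rw [h]; exact c.2)⟩
      left_inv := ?_
      right_inv := ?_ }
  · refine ConnectedComponent.ind fun x => ?_
    apply ConnectedComponent.eq.mpr
    set c := K.connectedComponentMk x.1 with hc
    have hv : K.connectedComponentMk c.exists_rep.choose = c := c.exists_rep.choose_spec
    obtain ⟨p⟩ := ConnectedComponent.eq.mp hv
    refine reachable_induce_of_walk p (fun z hz => ?_) _ x.2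
    rw [keymem, mem_supp_of_mem_support p hz, hv]
    exact (keymem x.1).mp x.2
  · rintro ⟨c, hc⟩
    apply Subtype.ext
    simp only [ConnectedComponent.lift_mk]
    exact (c.exists_rep.choose_spec : K.connectedComponentMk _ = c)

lemma card_cc_compl {K : SimpleGraph γ} [Finite γ] (c₀ : K.ConnectedComponent) :
    Nat.card (K.induce c₀.suppᶜ).ConnectedComponent + 1
      = Nat.card K.ConnectedComponent := by
  classical
  haveI : Finite K.ConnectedComponent :=
    Finite.of_surjective _ (ConnectedComponent.ind (fun v => ⟨v, rfl⟩) :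
      Function.Surjective K.connectedComponentMk)
  haveI := Fintype.ofFinite K.ConnectedComponent
  rw [Nat.card_congr (compComplEquiv c₀), Nat.card_eq_fintype_card, Nat.card_eq_fintype_card]
  classical
  rw [Fintype.card_subtype_compl (p := fun c => c = c₀), Fintype.card_subtype_eq]
  have : 1 ≤ Fintype.card K.ConnectedComponent := by
    rw [Nat.one_le_iff_ne_zero, ← Nat.pos_iff_ne_zero, Fintype.card_pos_iff]
    exact ⟨c₀⟩
  omega

lemma finite_cc {G : SimpleGraph α} [Finite α] : Finite G.ConnectedComponent :=
  Finite.of_surjective _ (ConnectedComponent.ind (fun v => ⟨v, rfl⟩) :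
      Function.Surjective G.connectedComponentMk)

/-- If two edge sets cover all edges of a graph without isolated vertices, and their vertex
sets meet, then the number of components drops. -/
lemma card_cc_lt {ρ : Type*} {R : SimpleGraph ρ} [Finite ρ] {P₁ P₂ : Set (Sym2 ρ)}
    (hcover : P₁ ∪ P₂ = R.edgeSet) (hnoiso : ∀ x : ρ, ∃ y, R.Adj x y)
    (hmeet : ∃ x, x ∈ (edgeSubgraph R P₁).verts ∧ x ∈ (edgeSubgraph R P₂).verts) :
    Nat.card R.ConnectedComponent <
      Nat.card (edgeSubgraph R P₁).coe.ConnectedComponent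
      + Nat.card (edgeSubgraph R P₂).coe.ConnectedComponent := by
  classical
  haveI : Finite R.ConnectedComponent := finite_cc
  haveI : Finite (edgeSubgraph R P₁).coe.ConnectedComponent := finite_cc
  haveI : Finite (edgeSubgraph R P₂).coe.ConnectedComponent := finite_cc
  haveI := Fintype.ofFinite R.ConnectedComponent
  haveI := Fintype.ofFinite (edgeSubgraph R P₁).coe.ConnectedComponent
  haveI := Fintype.ofFinite (edgeSubgraph R P₂).coe.ConnectedComponent
  set σ : (edgeSubgraph R P₁).coe.ConnectedComponent ⊕
      (edgeSubgraph R P₂).coe.ConnectedComponent → R.ConnectedComponent :=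
    Sum.elim (ConnectedComponent.map (edgeSubgraph R P₁).hom)
      (ConnectedComponent.map (edgeSubgraph R P₂).hom) with hσ
  have hsurj : Function.Surjective σ := by
    refine ConnectedComponent.ind fun v => ?_
    obtain ⟨y, hy⟩ := hnoiso v
    have hedge : s(v, y) ∈ P₁ ∪ P₂ := by rw [hcover]; exact hy
    rcases hedge with hmem | hmem
    · exact ⟨Sum.inl ((edgeSubgraph R P₁).coe.connectedComponentMk ⟨v, ⟨y, hy, hmem⟩⟩), rfl⟩
    · exact ⟨Sum.inr ((edgeSubgraph R P₂).coe.connectedComponentMk ⟨v, ⟨y, hy, hmem⟩⟩), rfl⟩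
  have hninj : ¬ Function.Injective σ := by
    obtain ⟨x, h1, h2⟩ := hmeet
    intro hinj
    have : (Sum.inl ((edgeSubgraph R P₁).coe.connectedComponentMk ⟨x, h1⟩) :
        (edgeSubgraph R P₁).coe.ConnectedComponent ⊕
          (edgeSubgraph R P₂).coe.ConnectedComponent)
        = Sum.inr ((edgeSubgraph R P₂).coe.connectedComponentMk ⟨x, h2⟩) := hinj rfl
    simp at this
  have := Fintype.card_lt_of_surjective_not_injective σ hsurj hninj
  rw [Fintype.card_sum] at this
  simp only [Nat.card_eq_fintype_card]
  omega

end Components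


section Decomp

variable {υ ρ : Type*}

/-- The edge subgraph on all edges is isomorphic to the graph, if it has no isolated vertex. -/
noncomputable def fullIso {A : SimpleGraph α} (h : ∀ x : α, ∃ y, A.Adj x y) :
    (edgeSubgraph A A.edgeSet).coe ≃g A := by
  have hbij : Function.Bijective (fun x : (edgeSubgraph A A.edgeSet).verts => (x : α)) := by
    refine ⟨fun a b hab => Subtype.ext hab, fun x => ?_⟩
    obtain ⟨y, hy⟩ := h x
    exact ⟨⟨x, ⟨y, hy, (SimpleGraph.mem_edgeSet A).mpr hy⟩⟩, rfl⟩
  refine ⟨Equiv.ofBijective _ hbij, ?_⟩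
  intro a b
  simp only [Equiv.ofBijective_apply, Subgraph.coe_adj, edgeSubgraph_adj,
    SimpleGraph.mem_edgeSet, and_self]

/-- Decompositions of the edges of `R` into a copy of `K₁` and a copy of `K₂`. -/
def decomps (K₁ : SimpleGraph γ) (K₂ : SimpleGraph δ) (R : SimpleGraph ρ) :
    Set (Set (Sym2 ρ) × Set (Sym2 ρ)) :=
  {p | p.1 ∈ copies K₁ R ∧ p.2 ∈ copies K₂ R ∧ p.1 ∪ p.2 = R.edgeSet}

lemma push_symm_push {ρ' : Type*} {R : SimpleGraph ρ} {R' : SimpleGraph ρ'} (ψ : R ≃g R')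
    (U : Set (Sym2 ρ)) : push ψ.symm (push ψ U) = U := by
  rw [push_push, show (⇑ψ.symm ∘ ⇑ψ) = id from funext fun x => ψ.symm_apply_apply x, push_id]

lemma push_push_symm {ρ' : Type*} {R : SimpleGraph ρ} {R' : SimpleGraph ρ'} (ψ : R ≃g R')
    (U : Set (Sym2 ρ')) : push ψ (push ψ.symm U) = U := by
  rw [push_push, show (⇑ψ ∘ ⇑ψ.symm) = id from funext fun x => ψ.apply_symm_apply x, push_id]

lemma push_mem_decomps {ρ' : Type*} {K₁ : SimpleGraph γ} {K₂ : SimpleGraph δ}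
    {R : SimpleGraph ρ} {R' : SimpleGraph ρ'} (ψ : R ≃g R')
    {p : Set (Sym2 ρ) × Set (Sym2 ρ)} (hp : p ∈ decomps K₁ K₂ R) :
    (push ψ p.1, push ψ p.2) ∈ decomps K₁ K₂ R' := by
  refine ⟨push_mem_copies ψ.toHom ψ.toEquiv.injective hp.1,
    push_mem_copies ψ.toHom ψ.toEquiv.injective hp.2.1, ?_⟩
  rw [← push_union, hp.2.2, push_edgeSet_of_iso]

/-- Decompositions transport along isomorphisms. -/
noncomputable def decompsEquiv {ρ' : Type*} {K₁ : SimpleGraph γ} {K₂ : SimpleGraph δ}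
    {R : SimpleGraph ρ} {R' : SimpleGraph ρ'} (ψ : R ≃g R') :
    decomps K₁ K₂ R ≃ decomps K₁ K₂ R' where
  toFun p := ⟨(push ψ p.1.1, push ψ p.1.2), push_mem_decomps ψ p.2⟩
  invFun p := ⟨(push ψ.symm p.1.1, push ψ.symm p.1.2), push_mem_decomps ψ.symm p.2⟩
  left_inv p := by
    apply Subtype.ext
    exact Prod.ext (push_symm_push ψ _) (push_symm_push ψ _)
  right_inv p := by
    apply Subtype.ext
    exact Prod.ext (push_push_symm ψ _) (push_push_symm ψ _)

variable {K : SimpleGraph υ}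

lemma no_isolated_supp (hK : ∀ u, ∃ w, K.Adj u w) (c₀ : K.ConnectedComponent) :
    ∀ x : c₀.supp, ∃ y, (K.induce c₀.supp).Adj x y := by
  rintro ⟨x, hx⟩
  obtain ⟨w, hw⟩ := hK x
  rw [ConnectedComponent.mem_supp_iff] at hx
  have hwmem : w ∈ c₀.supp := by
    rw [ConnectedComponent.mem_supp_iff, ← ConnectedComponent.connectedComponentMk_eq_of_adj hw, hx]
  exact ⟨⟨w, hwmem⟩, hw⟩

lemma no_isolated_suppc (hK : ∀ u, ∃ w, K.Adj u w) (c₀ : K.ConnectedComponent) :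
    ∀ x : ↥c₀.suppᶜ, ∃ y, (K.induce c₀.suppᶜ).Adj x y := by
  rintro ⟨x, hx⟩
  obtain ⟨w, hw⟩ := hK x
  rw [Set.mem_compl_iff, ConnectedComponent.mem_supp_iff] at hx
  have hwmem : w ∈ c₀.suppᶜ := by
    rw [Set.mem_compl_iff, ConnectedComponent.mem_supp_iff,
      ← ConnectedComponent.connectedComponentMk_eq_of_adj hw]
    exact hx
  exact ⟨⟨w, hwmem⟩, hw⟩

/-- The canonical decomposition of `K` into the component `c₀` and the rest. -/
lemma canonical_decomp (hK : ∀ u, ∃ w, K.Adj u w) (c₀ : K.ConnectedComponent) :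
    ∃ p, p ∈ decomps (K.induce c₀.supp) (K.induce c₀.suppᶜ) K ∧
      (∀ x ∈ (edgeSubgraph K p.1).verts, x ∈ c₀.supp) ∧
      (∀ x ∈ (edgeSubgraph K p.2).verts, x ∈ c₀.suppᶜ) := by
  set e₁ := SimpleGraph.Embedding.induce (G := K) c₀.supp
  set e₂ := SimpleGraph.Embedding.induce (G := K) c₀.suppᶜ
  have hinj1 : Function.Injective (e₁.toHom : c₀.supp → υ) := fun a b h => Subtype.ext h
  have hinj2 : Function.Injective (e₂.toHom : ↥c₀.suppᶜ → υ) := fun a b h => Subtype.ext h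
  refine ⟨(push e₁.toHom (K.induce c₀.supp).edgeSet,
           push e₂.toHom (K.induce c₀.suppᶜ).edgeSet), ⟨?_, ?_, ?_⟩, ?_, ?_⟩
  · exact ⟨push_subset_edgeSet e₁.toHom (fun z h => h),
      ⟨(pushIso e₁.toHom hinj1 (fun z h => h)).symm.trans (fullIso (no_isolated_supp hK c₀))⟩⟩
  · exact ⟨push_subset_edgeSet e₂.toHom (fun z h => h),
      ⟨(pushIso e₂.toHom hinj2 (fun z h => h)).symm.trans (fullIso (no_isolated_suppc hK c₀))⟩⟩
  · apply Set.Subset.antisymm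
    · exact Set.union_subset (push_subset_edgeSet e₁.toHom (fun z h => h))
        (push_subset_edgeSet e₂.toHom (fun z h => h))
    · intro z hz
      induction z with
      | _ x y =>
          have hadj : K.Adj x y := (SimpleGraph.mem_edgeSet K).mp hz
          by_cases hx : K.connectedComponentMk x = c₀
          · have hy : K.connectedComponentMk y = c₀ := by
              rw [← ConnectedComponent.connectedComponentMk_eq_of_adj hadj]; exact hx
            refine Set.mem_union_left _ ⟨s(⟨x, hx⟩, ⟨y, hy⟩), ?_, by rw [Sym2.map_pair_eq]; rfl⟩
            exact (SimpleGraph.mem_edgeSet _).mpr hadj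
          · have hy : ¬ K.connectedComponentMk y = c₀ := by
              rw [← ConnectedComponent.connectedComponentMk_eq_of_adj hadj]; exact hx
            refine Set.mem_union_right _ ⟨s(⟨x, hx⟩, ⟨y, hy⟩), ?_, by rw [Sym2.map_pair_eq]; rfl⟩
            exact (SimpleGraph.mem_edgeSet _).mpr hadj
  · intro x hx
    obtain ⟨z, hz, hzx⟩ := (mem_verts_push e₁.toHom hinj1 (fun z h => h)).mp hx
    rw [← hzx]; exact z.2
  · intro x hx
    obtain ⟨z, hz, hzx⟩ := (mem_verts_push e₂.toHom hinj2 (fun z h => h)).mp hx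
    rw [← hzx]; exact z.2

end Decomp


section Glue

variable {υ ρ : Type*} {K : SimpleGraph υ} {R : SimpleGraph ρ}

/-- If the edges of `R` decompose into vertex-disjoint copies of the two parts of `K`
(split along a connected component), then `R` is isomorphic to `K`. -/
lemma glue_iso (c₀ : K.ConnectedComponent) (hR : ∀ x : ρ, ∃ y, R.Adj x y)
    {B₁ B₂ : Set (Sym2 ρ)}
    (h₁ : B₁ ∈ copies (K.induce c₀.supp) R) (h₂ : B₂ ∈ copies (K.induce c₀.suppᶜ) R)
    (hcover : B₁ ∪ B₂ = R.edgeSet)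
    (hdisj : ∀ x, ¬(x ∈ (edgeSubgraph R B₁).verts ∧ x ∈ (edgeSubgraph R B₂).verts)) :
    Nonempty (R ≃g K) := by
  classical
  obtain ⟨φ₁⟩ := h₁.2
  obtain ⟨φ₂⟩ := h₂.2
  have hv2 : ∀ x : ρ, x ∉ (edgeSubgraph R B₁).verts → x ∈ (edgeSubgraph R B₂).verts := by
    intro x hx
    obtain ⟨y, hy⟩ := hR x
    have hm : s(x, y) ∈ B₁ ∪ B₂ := by rw [hcover]; exact (SimpleGraph.mem_edgeSet R).mpr hy
    rcases hm with h | h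
    · exact absurd ⟨y, hy, h⟩ hx
    · exact ⟨y, hy, h⟩
  set F : ρ → υ := fun x => if h : x ∈ (edgeSubgraph R B₁).verts
    then (φ₁ ⟨x, h⟩ : c₀.supp).1 else (φ₂ ⟨x, hv2 x h⟩ : ↥c₀.suppᶜ).1 with hF
  have hF1 : ∀ (x) (h : x ∈ (edgeSubgraph R B₁).verts), F x = (φ₁ ⟨x, h⟩ : c₀.supp).1 :=
    fun x h => dif_pos h
  have hF2 : ∀ (x) (h : x ∉ (edgeSubgraph R B₁).verts),
      F x = (φ₂ ⟨x, hv2 x h⟩ : ↥c₀.suppᶜ).1 := fun x h => dif_neg h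
  have hmem1 : ∀ (x) (h : x ∈ (edgeSubgraph R B₁).verts), F x ∈ c₀.supp := by
    intro x h; rw [hF1 x h]; exact (φ₁ ⟨x, h⟩).2
  have hmem2 : ∀ (x) (h : x ∉ (edgeSubgraph R B₁).verts), F x ∈ c₀.suppᶜ := by
    intro x h; rw [hF2 x h]; exact (φ₂ ⟨x, hv2 x h⟩).2
  have hx1 : ∀ x, F x ∈ c₀.supp → x ∈ (edgeSubgraph R B₁).verts := by
    intro x hx
    by_contra h
    exact (hmem2 x h) hx
  have hbij : Function.Bijective F := by
    constructor
    · intro a b hab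
      by_cases ha : a ∈ (edgeSubgraph R B₁).verts <;>
        by_cases hb : b ∈ (edgeSubgraph R B₁).verts
      · rw [hF1 a ha, hF1 b hb] at hab
        have := φ₁.toEquiv.injective (Subtype.ext hab)
        exact congrArg Subtype.val this
      · exact absurd (hab ▸ hmem1 a ha) (hmem2 b hb)
      · exact absurd (hab ▸ hmem2 a ha) (by simpa using hmem1 b hb)
      · rw [hF2 a ha, hF2 b hb] at hab
        have := φ₂.toEquiv.injective (Subtype.ext hab)
        exact congrArg Subtype.val this
    · intro u
      by_cases hu : u ∈ c₀.supp
      · refine ⟨(φ₁.symm ⟨u, hu⟩).1, ?_⟩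
        rw [hF1 _ (φ₁.symm ⟨u, hu⟩).2]
        exact congrArg Subtype.val (φ₁.apply_symm_apply ⟨u, hu⟩)
      · have hu' : u ∈ c₀.suppᶜ := hu
        have hz2 : (φ₂.symm ⟨u, hu'⟩).1 ∈ (edgeSubgraph R B₂).verts := (φ₂.symm ⟨u, hu'⟩).2
        have hz1 : (φ₂.symm ⟨u, hu'⟩).1 ∉ (edgeSubgraph R B₁).verts := by
          intro h
          exact hdisj _ ⟨h, hz2⟩
        refine ⟨(φ₂.symm ⟨u, hu'⟩).1, ?_⟩
        rw [hF2 _ hz1]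
        exact congrArg Subtype.val (φ₂.apply_symm_apply ⟨u, hu'⟩)
  refine ⟨⟨Equiv.ofBijective F hbij, ?_⟩⟩
  intro a b
  simp only [Equiv.ofBijective_apply]
  constructor
  · intro hab
    by_cases ha : a ∈ (edgeSubgraph R B₁).verts
    · have hFa : F a ∈ c₀.supp := hmem1 a ha
      have hFb : F b ∈ c₀.supp := by
        rw [ConnectedComponent.mem_supp_iff,
          ← ConnectedComponent.connectedComponentMk_eq_of_adj hab]
        exact (ConnectedComponent.mem_supp_iff _ _).mp hFa
      have hb : b ∈ (edgeSubgraph R B₁).verts := hx1 b hFb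
      rw [hF1 a ha, hF1 b hb] at hab
      have hadj : (K.induce c₀.supp).Adj (φ₁ ⟨a, ha⟩) (φ₁ ⟨b, hb⟩) := hab
      have := φ₁.map_adj_iff.mp hadj
      rw [Subgraph.coe_adj] at this
      exact this.1
    · have hFa : F a ∈ c₀.suppᶜ := hmem2 a ha
      have hFb : F b ∈ c₀.suppᶜ := by
        rw [Set.mem_compl_iff, ConnectedComponent.mem_supp_iff,
          ← ConnectedComponent.connectedComponentMk_eq_of_adj hab]
        rw [Set.mem_compl_iff, ConnectedComponent.mem_supp_iff] at hFa
        exact hFa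
      have hb : b ∉ (edgeSubgraph R B₁).verts := by
        intro h
        exact hFb (hmem1 b h)
      rw [hF2 a ha, hF2 b hb] at hab
      have hadj : (K.induce c₀.suppᶜ).Adj (φ₂ ⟨a, hv2 a ha⟩) (φ₂ ⟨b, hv2 b hb⟩) := hab
      have := φ₂.map_adj_iff.mp hadj
      rw [Subgraph.coe_adj] at this
      exact this.1
  · intro hab
    have hm : s(a, b) ∈ B₁ ∪ B₂ := by rw [hcover]; exact (SimpleGraph.mem_edgeSet R).mpr hab
    rcases hm with h | h
    · have ha : a ∈ (edgeSubgraph R B₁).verts := ⟨b, hab, h⟩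
      have hb : b ∈ (edgeSubgraph R B₁).verts := ⟨a, hab.symm, by rwa [Sym2.eq_swap]⟩
      rw [hF1 a ha, hF1 b hb]
      have hcoe : (edgeSubgraph R B₁).coe.Adj ⟨a, ha⟩ ⟨b, hb⟩ := by
        rw [Subgraph.coe_adj]; exact ⟨hab, h⟩
      exact φ₁.map_adj_iff.mpr hcoe
    · have ha2 : a ∈ (edgeSubgraph R B₂).verts := ⟨b, hab, h⟩
      have hb2 : b ∈ (edgeSubgraph R B₂).verts := ⟨a, hab.symm, by rwa [Sym2.eq_swap]⟩
      have ha : a ∉ (edgeSubgraph R B₁).verts := fun h' => hdisj a ⟨h', ha2⟩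
      have hb : b ∉ (edgeSubgraph R B₁).verts := fun h' => hdisj b ⟨h', hb2⟩
      rw [hF2 a ha, hF2 b hb]
      have hcoe : (edgeSubgraph R B₂).coe.Adj ⟨a, hv2 a ha⟩ ⟨b, hv2 b hb⟩ := by
        rw [Subgraph.coe_adj]; exact ⟨hab, h⟩
      exact φ₂.map_adj_iff.mpr hcoe

end Glue


section Shapes

lemma card_verts_le_two_mul {G : SimpleGraph α} [Fintype α] {U : Set (Sym2 α)} :
    Nat.card (edgeSubgraph G U).verts ≤ 2 * U.ncard := by
  classical
  have h1 : (edgeSubgraph G U).verts.toFinset ⊆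
      U.toFinset.biUnion (fun e => Finset.univ.filter (· ∈ e)) := by
    intro v hv
    rw [Set.mem_toFinset] at hv
    obtain ⟨w, hadj, hmem⟩ := hv
    rw [Finset.mem_biUnion]
    exact ⟨s(v, w), Set.mem_toFinset.mpr hmem, by simp⟩
  have h2 : ∀ e : Sym2 α, (Finset.univ.filter (· ∈ e)).card ≤ 2 := by
    intro e
    induction e with
    | _ a b =>
        refine le_trans (Finset.card_le_card (t := {a, b}) ?_) ?_
        · intro x hx
          rw [Finset.mem_filter] at hx
          rcases Sym2.mem_iff.mp hx.2 with h | h <;> simp [h]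
        · exact le_trans (Finset.card_insert_le a {b}) (by simp)
  calc Nat.card (edgeSubgraph G U).verts = (edgeSubgraph G U).verts.toFinset.card := by
        rw [Nat.card_coe_set_eq, Set.ncard_eq_toFinset_card']
    _ ≤ (U.toFinset.biUnion (fun e => Finset.univ.filter (· ∈ e))).card :=
        Finset.card_le_card h1
    _ ≤ ∑ e ∈ U.toFinset, (Finset.univ.filter (· ∈ e)).card := Finset.card_biUnion_le
    _ ≤ ∑ _e ∈ U.toFinset, 2 := Finset.sum_le_sum (fun e _ => h2 e)
    _ = U.toFinset.card * 2 := by rw [Finset.sum_const, smul_eq_mul]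
    _ = 2 * U.ncard := by rw [Set.ncard_eq_toFinset_card', Nat.mul_comm]

/-- The type of graphs on at most `2 * k` vertices. -/
abbrev TGraph (k : ℕ) := Σ n : Fin (2 * k + 1), SimpleGraph (Fin (n : ℕ))

/-- Isomorphism classes of graphs on at most `2 * k` vertices. -/
def tsetoid (k : ℕ) : Setoid (TGraph k) where
  r t s := Nonempty (t.2 ≃g s.2)
  iseqv := ⟨fun t => ⟨Iso.refl⟩, fun ⟨φ⟩ => ⟨φ.symm⟩, fun ⟨φ⟩ ⟨ψ⟩ => ⟨φ.trans ψ⟩⟩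

abbrev QGraph (k : ℕ) := Quotient (tsetoid k)

noncomputable instance (k : ℕ) : Fintype (QGraph k) := by
  classical
  exact Quotient.fintype _

/-- Transporting a graph along an equivalence of vertex types. -/
def isoComap {τ τ' : Type*} (A : SimpleGraph τ) (e : τ ≃ τ') : A ≃g (A.comap e.symm) := by
  refine ⟨e, ?_⟩
  intro a b
  simp [SimpleGraph.comap]

/-- The isomorphism class of the graph spanned by an edge set. -/
noncomputable def shape (k : ℕ) (G : SimpleGraph α) [Fintype α] (S : Set (Sym2 α)) :
    QGraph k := by
  letI : Fintype (edgeSubgraph G S).verts := Fintype.ofFinite _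
  exact if h : Nat.card (edgeSubgraph G S).verts ≤ 2 * k then
    ⟦⟨⟨Nat.card (edgeSubgraph G S).verts, by omega⟩,
      ((edgeSubgraph G S).coe.comap
        ((Fintype.equivFinOfCardEq (Nat.card_eq_fintype_card (α := (edgeSubgraph G S).verts)).symm).symm))⟩⟧
  else ⟦⟨⟨0, by omega⟩, ⊥⟩⟧

lemma shape_eq_iff {k : ℕ} {G : SimpleGraph α} [Fintype α] {S : Set (Sym2 α)}
    (h : Nat.card (edgeSubgraph G S).verts ≤ 2 * k) (t : TGraph k) :
    shape k G S = ⟦t⟧ ↔ Nonempty ((edgeSubgraph G S).coe ≃g t.2) := by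
  letI : Fintype (edgeSubgraph G S).verts := Fintype.ofFinite _
  rw [shape]
  rw [dif_pos h, Quotient.eq]
  have hiso := isoComap ((edgeSubgraph G S).coe)
    ((Fintype.equivFinOfCardEq (Nat.card_eq_fintype_card (α := (edgeSubgraph G S).verts)).symm))
  constructor
  · rintro ⟨ψ⟩
    exact ⟨hiso.trans ψ⟩
  · rintro ⟨ψ⟩
    exact ⟨hiso.symm.trans ψ⟩

/-- Pairs of copies with a prescribed union correspond to decompositions of the spanned
subgraph. -/
noncomputable def pairsEquivDecomps {K₁ : SimpleGraph γ} {K₂ : SimpleGraph δ}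
    {G : SimpleGraph α} {S : Set (Sym2 α)} (hS : S ⊆ G.edgeSet) :
    decomps K₁ K₂ (edgeSubgraph G S).coe ≃
      {p : Set (Sym2 α) × Set (Sym2 α) //
        p.1 ∈ copies K₁ G ∧ p.2 ∈ copies K₂ G ∧ p.1 ∪ p.2 = S} := by
  classical
  have hval : (⇑(edgeSubgraph G S).hom : (edgeSubgraph G S).verts → α) = Subtype.val := rfl
  have hinj : Function.Injective (⇑(edgeSubgraph G S).hom) := by
    rw [hval]; exact Subtype.val_injective
  have hpushE : push (⇑(edgeSubgraph G S).hom) (edgeSubgraph G S).coe.edgeSet = S := by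
    rw [hval]; exact push_val_coe_edgeSet hS
  have hmm : ∀ q : decomps K₁ K₂ (edgeSubgraph G S).coe,
      (push (⇑(edgeSubgraph G S).hom) q.1.1 ∈ copies K₁ G ∧
       push (⇑(edgeSubgraph G S).hom) q.1.2 ∈ copies K₂ G ∧
       push (⇑(edgeSubgraph G S).hom) q.1.1 ∪ push (⇑(edgeSubgraph G S).hom) q.1.2 = S) := by
    rintro ⟨⟨A₁, A₂⟩, hA₁, hA₂, hAu⟩
    refine ⟨push_mem_copies (edgeSubgraph G S).hom hinj hA₁,
      push_mem_copies (edgeSubgraph G S).hom hinj hA₂, ?_⟩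
    rw [← push_union, hAu, hpushE]
  refine Equiv.ofBijective (fun q => ⟨(push (⇑(edgeSubgraph G S).hom) q.1.1,
    push (⇑(edgeSubgraph G S).hom) q.1.2), hmm q⟩) ⟨?_, ?_⟩
  · intro q q' hqq
    apply Subtype.ext
    have h1 := congrArg (fun z => z.1.1) hqq
    have h2 := congrArg (fun z => z.1.2) hqq
    exact Prod.ext (push_injective hinj h1) (push_injective hinj h2)
  · rintro ⟨⟨U₁, U₂⟩, hU₁, hU₂, hUu⟩
    have pull : ∀ {U : Set (Sym2 α)}, U ⊆ S → U ⊆ G.edgeSet →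
        ∃ A, A ⊆ (edgeSubgraph G S).coe.edgeSet ∧ push (⇑(edgeSubgraph G S).hom) A = U := by
      intro U hUS hUE
      refine exists_push_eq (edgeSubgraph G S).hom ?_ ?_
      · intro v w hvw
        have hv : v ∈ (edgeSubgraph G S).verts :=
          ⟨w, (SimpleGraph.mem_edgeSet G).mp (hUE hvw), hUS hvw⟩
        exact ⟨⟨v, hv⟩, rfl⟩
      · intro x y hxy
        rw [Subgraph.coe_adj]
        exact ⟨(SimpleGraph.mem_edgeSet G).mp (hUE hxy), hUS hxy⟩
    obtain ⟨A₁, hA₁E, hA₁p⟩ := pull (hUu ▸ Set.subset_union_left) hU₁.1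
    obtain ⟨A₂, hA₂E, hA₂p⟩ := pull (hUu ▸ Set.subset_union_right) hU₂.1
    have hA₁c : A₁ ∈ copies K₁ (edgeSubgraph G S).coe := by
      obtain ⟨φ⟩ := hU₁.2
      exact ⟨hA₁E, ⟨((pushIso (edgeSubgraph G S).hom hinj hA₁E).trans
        (isoOfEq hA₁p)).trans φ⟩⟩
    have hA₂c : A₂ ∈ copies K₂ (edgeSubgraph G S).coe := by
      obtain ⟨φ⟩ := hU₂.2
      exact ⟨hA₂E, ⟨((pushIso (edgeSubgraph G S).hom hinj hA₂E).trans
        (isoOfEq hA₂p)).trans φ⟩⟩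
    have hAu : A₁ ∪ A₂ = (edgeSubgraph G S).coe.edgeSet := by
      apply push_injective hinj
      rw [push_union, hA₁p, hA₂p, hpushE, hUu]
    refine ⟨⟨(A₁, A₂), hA₁c, hA₂c, hAu⟩, ?_⟩
    apply Subtype.ext
    exact Prod.ext hA₁p hA₂p

lemma copies_eq_empty_of_isolated {R : SimpleGraph δ} {G : SimpleGraph α}
    (h : ∃ x : δ, ∀ y, ¬ R.Adj x y) : copies R G = ∅ := by
  obtain ⟨x, hx⟩ := h
  rw [Set.eq_empty_iff_forall_notMem]
  rintro U ⟨hsub, ⟨φ⟩⟩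
  obtain ⟨y, hy⟩ := coe_no_isolated (G := G) (U := U) (φ.symm x)
  have h2 : R.Adj (φ (φ.symm x)) (φ y) := φ.map_adj_iff.mpr hy
  rw [φ.apply_symm_apply] at h2
  exact hx (φ y) h2

end Shapes


section Master

variable [Fintype α] {G : SimpleGraph α} {K₁ : SimpleGraph γ} {K₂ : SimpleGraph δ}

lemma shape_eq_q_iff {k : ℕ} {S : Set (Sym2 α)}
    (h : Nat.card (edgeSubgraph G S).verts ≤ 2 * k) (q : QGraph k) :
    shape k G S = q ↔ Nonempty ((edgeSubgraph G S).coe ≃g (Quotient.out q).2) := by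
  rw [← shape_eq_iff h (Quotient.out q)]
  rw [Quotient.out_eq]

lemma card_fiber_eq {k : ℕ}
    (hsum : ∀ U₁ U₂ : Set (Sym2 α), U₁ ∈ copies K₁ G → U₂ ∈ copies K₂ G →
      (U₁ ∪ U₂).ncard ≤ k) (q : QGraph k) :
    Nat.card {p : ↥(copies K₁ G) × ↥(copies K₂ G) // shape k G (p.1.1 ∪ p.2.1) = q}
      = Nat.card (decomps K₁ K₂ (Quotient.out q).2)
        * Nat.card {S : Set (Sym2 α) // S ∈ copies (Quotient.out q).2 G ∧ S.ncard ≤ k} := by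
  classical
  have hbound : ∀ {S : Set (Sym2 α)}, S.ncard ≤ k →
      Nat.card (edgeSubgraph G S).verts ≤ 2 * k := fun hS =>
    le_trans card_verts_le_two_mul (Nat.mul_le_mul_left 2 hS)
  -- the forward map
  have Ψmem : ∀ (S : {S : Set (Sym2 α) // S ∈ copies (Quotient.out q).2 G ∧ S.ncard ≤ k})
      (d : decomps K₁ K₂ (edgeSubgraph G S.1).coe),
      ∃ p : ↥(copies K₁ G) × ↥(copies K₂ G), shape k G (p.1.1 ∪ p.2.1) = q ∧
        ((p.1.1, p.2.1) : Set (Sym2 α) × Set (Sym2 α))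
          = (pairsEquivDecomps S.2.1.1 d).1 := by
    intro S d
    obtain ⟨pr, hpr⟩ := pairsEquivDecomps S.2.1.1 d
    refine ⟨(⟨pr.1, hpr.1⟩, ⟨pr.2, hpr.2.1⟩), ?_, rfl⟩
    have hup : pr.1 ∪ pr.2 = S.1 := hpr.2.2
    simp only [hup]
    exact (shape_eq_q_iff (hbound S.2.2) q).mpr S.2.1.2
  set Ψ : (Σ S : {S : Set (Sym2 α) // S ∈ copies (Quotient.out q).2 G ∧ S.ncard ≤ k},
      decomps K₁ K₂ (edgeSubgraph G S.1).coe) →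
      {p : ↥(copies K₁ G) × ↥(copies K₂ G) // shape k G (p.1.1 ∪ p.2.1) = q} :=
    fun x => ⟨(⟨(pairsEquivDecomps x.1.2.1.1 x.2).1.1, (pairsEquivDecomps x.1.2.1.1 x.2).2.1⟩,
               ⟨(pairsEquivDecomps x.1.2.1.1 x.2).1.2, (pairsEquivDecomps x.1.2.1.1 x.2).2.2.1⟩),
      by
        have hup : (pairsEquivDecomps x.1.2.1.1 x.2).1.1 ∪ (pairsEquivDecomps x.1.2.1.1 x.2).1.2
            = x.1.1 := (pairsEquivDecomps x.1.2.1.1 x.2).2.2.2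
        simp only [hup]
        exact (shape_eq_q_iff (hbound x.1.2.2) q).mpr x.1.2.1.2⟩ with hΨ
  have hΨbij : Function.Bijective Ψ := by
    constructor
    · rintro ⟨⟨S, hS⟩, d⟩ ⟨⟨S', hS'⟩, d'⟩ h
      have e1 : (pairsEquivDecomps hS.1.1 d).1.1 = (pairsEquivDecomps hS'.1.1 d').1.1 :=
        congrArg (fun z =>
          ((z : {p : ↥(copies K₁ G) × ↥(copies K₂ G) //
            shape k G (p.1.1 ∪ p.2.1) = q}).1.1 : Set (Sym2 α))) h
      have e2 : (pairsEquivDecomps hS.1.1 d).1.2 = (pairsEquivDecomps hS'.1.1 d').1.2 :=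
        congrArg (fun z =>
          ((z : {p : ↥(copies K₁ G) × ↥(copies K₂ G) //
            shape k G (p.1.1 ∪ p.2.1) = q}).1.2 : Set (Sym2 α))) h
      have hSS : S = S' := by
        rw [← (pairsEquivDecomps hS.1.1 d).2.2.2, ← (pairsEquivDecomps hS'.1.1 d').2.2.2,
          e1, e2]
      subst hSS
      have hval : (pairsEquivDecomps hS.1.1 d) = (pairsEquivDecomps hS.1.1 d') := by
        apply Subtype.ext
        exact Prod.ext e1 e2
      have hdd : d = d' := (pairsEquivDecomps hS.1.1).injective hval
      subst hdd
      rfl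
    · rintro ⟨⟨⟨U₁, hU₁⟩, ⟨U₂, hU₂⟩⟩, hq⟩
      have hSsub : U₁ ∪ U₂ ⊆ G.edgeSet := Set.union_subset hU₁.1 hU₂.1
      have hSk : (U₁ ∪ U₂).ncard ≤ k := hsum U₁ U₂ hU₁ hU₂
      have hScop : (U₁ ∪ U₂) ∈ copies (Quotient.out q).2 G :=
        ⟨hSsub, (shape_eq_q_iff (hbound hSk) q).mp hq⟩
      set d := (pairsEquivDecomps (K₁ := K₁) (K₂ := K₂) hSsub).symm
        ⟨(U₁, U₂), hU₁, hU₂, rfl⟩ with hd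
      refine ⟨⟨⟨U₁ ∪ U₂, hScop, hSk⟩, d⟩, ?_⟩
      have happ : pairsEquivDecomps hSsub d = ⟨(U₁, U₂), hU₁, hU₂, rfl⟩ := by
        rw [hd, Equiv.apply_symm_apply]
      apply Subtype.ext
      apply Prod.ext
      · apply Subtype.ext
        exact congrArg (fun z => (z : { p : Set (Sym2 α) × Set (Sym2 α) // _}).1.1) happ
      · apply Subtype.ext
        exact congrArg (fun z => (z : { p : Set (Sym2 α) × Set (Sym2 α) // _}).1.2) happ
  haveI : ∀ S : {S : Set (Sym2 α) // S ∈ copies (Quotient.out q).2 G ∧ S.ncard ≤ k},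
      Fintype (decomps K₁ K₂ (edgeSubgraph G S.1).coe) := fun S => Fintype.ofFinite _
  haveI : Fintype {S : Set (Sym2 α) // S ∈ copies (Quotient.out q).2 G ∧ S.ncard ≤ k} :=
    Fintype.ofFinite _
  haveI : Fintype {p : ↥(copies K₁ G) × ↥(copies K₂ G) // shape k G (p.1.1 ∪ p.2.1) = q} :=
    Fintype.ofFinite _
  have hcards : ∀ S : {S : Set (Sym2 α) // S ∈ copies (Quotient.out q).2 G ∧ S.ncard ≤ k},
      Nat.card (decomps K₁ K₂ (edgeSubgraph G S.1).coe)
        = Nat.card (decomps K₁ K₂ (Quotient.out q).2) := by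
    intro S
    obtain ⟨ψ⟩ := S.2.1.2
    exact Nat.card_congr (decompsEquiv ψ)
  calc Nat.card {p : ↥(copies K₁ G) × ↥(copies K₂ G) // shape k G (p.1.1 ∪ p.2.1) = q}
      = Nat.card (Σ S : {S : Set (Sym2 α) // S ∈ copies (Quotient.out q).2 G ∧ S.ncard ≤ k},
          decomps K₁ K₂ (edgeSubgraph G S.1).coe) :=
        (Nat.card_congr (Equiv.ofBijective Ψ hΨbij)).symm
    _ = ∑ S : {S : Set (Sym2 α) // S ∈ copies (Quotient.out q).2 G ∧ S.ncard ≤ k},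
          Nat.card (decomps K₁ K₂ (edgeSubgraph G S.1).coe) := by
        rw [Nat.card_eq_fintype_card, Fintype.card_sigma]
        exact Finset.sum_congr rfl fun S _ => (Nat.card_eq_fintype_card).symm
    _ = ∑ _S : {S : Set (Sym2 α) // S ∈ copies (Quotient.out q).2 G ∧ S.ncard ≤ k},
          Nat.card (decomps K₁ K₂ (Quotient.out q).2) :=
        Finset.sum_congr rfl fun S _ => hcards S
    _ = Nat.card (decomps K₁ K₂ (Quotient.out q).2)
          * Nat.card {S : Set (Sym2 α) // S ∈ copies (Quotient.out q).2 G ∧ S.ncard ≤ k} := by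
        rw [Finset.sum_const, Finset.card_univ, smul_eq_mul,
          Nat.card_eq_fintype_card (α := {S : Set (Sym2 α) //
            S ∈ copies (Quotient.out q).2 G ∧ S.ncard ≤ k}),
          Nat.card_eq_fintype_card (α := (decomps K₁ K₂ (Quotient.out q).2)),
          Nat.mul_comm]

lemma master {k : ℕ}
    (hsum : ∀ U₁ U₂ : Set (Sym2 α), U₁ ∈ copies K₁ G → U₂ ∈ copies K₂ G →
      (U₁ ∪ U₂).ncard ≤ k) :
    Nat.card (copies K₁ G) * Nat.card (copies K₂ G)
      = ∑ q : QGraph k, Nat.card (decomps K₁ K₂ (Quotient.out q).2)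
          * Nat.card {S : Set (Sym2 α) //
              S ∈ copies (Quotient.out q).2 G ∧ S.ncard ≤ k} := by
  classical
  haveI : Fintype (↥(copies K₁ G) × ↥(copies K₂ G)) := Fintype.ofFinite _
  haveI : ∀ q : QGraph k,
      Fintype {p : ↥(copies K₁ G) × ↥(copies K₂ G) // shape k G (p.1.1 ∪ p.2.1) = q} :=
    fun q => Fintype.ofFinite _
  calc Nat.card (copies K₁ G) * Nat.card (copies K₂ G)
      = Nat.card (↥(copies K₁ G) × ↥(copies K₂ G)) := (Nat.card_prod _ _).symm
    _ = ∑ q : QGraph k,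
          Nat.card {p : ↥(copies K₁ G) × ↥(copies K₂ G) // shape k G (p.1.1 ∪ p.2.1) = q} := by
        rw [Nat.card_eq_fintype_card,
          Fintype.card_congr (Equiv.sigmaFiberEquiv
            (fun p : ↥(copies K₁ G) × ↥(copies K₂ G) => shape k G (p.1.1 ∪ p.2.1))).symm,
          Fintype.card_sigma]
        exact Finset.sum_congr rfl fun q _ => (Nat.card_eq_fintype_card).symm
    _ = _ := Finset.sum_congr rfl fun q _ => card_fiber_eq hsum q

end Master


section MainProof

lemma card_cc_eq_one {ρ : Type*} {R : SimpleGraph ρ} (h : R.Connected) :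
    Nat.card R.ConnectedComponent = 1 := by
  rw [Nat.card_eq_one_iff_unique]
  constructor
  · constructor
    intro a b
    obtain ⟨v, hv⟩ := a.exists_rep
    obtain ⟨w, hw⟩ := b.exists_rep
    rw [← hv, ← hw]
    exact ConnectedComponent.eq.mpr (h.preconnected v w)
  · obtain ⟨v⟩ := h.nonempty
    exact ⟨R.connectedComponentMk v⟩

lemma card_subtype_copies {R : SimpleGraph δ} {X : SimpleGraph α} {k : ℕ}
    (hRk : R.edgeSet.ncard ≤ k) :
    Nat.card {S : Set (Sym2 α) // S ∈ copies R X ∧ S.ncard ≤ k}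
      = Nat.card (copies R X) :=
  Nat.card_congr (Equiv.subtypeEquivRight (fun S =>
    ⟨fun h => h.1, fun h => ⟨h, by rw [ncard_copy h]; exact hRk⟩⟩))

variable {V W : Type*} [Fintype V] [Fintype W]

set_option maxHeartbeats 1600000 in
lemma main_induction (G : SimpleGraph V) (H : SimpleGraph W) (k : ℕ) (Φ : V ≃ W)
    (hΦ : ∀ v : V, ∃ φ : (G.induce (_root_.ball G v k)) ≃g (H.induce (_root_.ball H (Φ v) k)),
        (φ ⟨v, mem_ball_self G v k⟩ : W) = Φ v) :
    ∀ (c : ℕ) (γ : Type) [inst : Fintype γ] (K : SimpleGraph γ),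
      Nat.card K.ConnectedComponent ≤ c → K.edgeSet.ncard ≤ k →
      (∀ u, ∃ w, K.Adj u w) → Nat.card (copies K G) = Nat.card (copies K H) := by
  intro c
  induction c with
  | zero =>
      intro γ inst K hc hke hni
      haveI : IsEmpty γ := by
        by_contra h
        rw [not_isEmpty_iff] at h
        obtain ⟨x⟩ := h
        haveI : Finite K.ConnectedComponent := finite_cc
        have : Nat.card K.ConnectedComponent ≠ 0 :=
          Nat.card_ne_zero.mpr ⟨⟨K.connectedComponentMk x⟩, ‹_›⟩
        omega
      rw [copies_of_isEmpty K G, copies_of_isEmpty K H,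
        Nat.card_coe_set_eq, Nat.card_coe_set_eq,
        Set.ncard_singleton, Set.ncard_singleton]
  | succ c ih =>
      intro γ inst K hc hke hni
      classical
      rcases Nat.lt_or_ge (Nat.card K.ConnectedComponent) (c + 1) with hlt | hge
      · exact ih γ K (by omega) hke hni
      have hcc : Nat.card K.ConnectedComponent = c + 1 := le_antisymm hc hge
      haveI : Finite K.ConnectedComponent := finite_cc
      have hne : Nonempty K.ConnectedComponent := (Nat.card_ne_zero.mp (by omega)).1
      obtain ⟨c₀⟩ := hne
      by_cases hc0 : c = 0
      · -- connected case
        subst hc0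
        have hsub := Nat.card_eq_one_iff_unique.mp hcc
        have hconn : K.Connected := by
          rw [SimpleGraph.connected_iff]
          refine ⟨fun u v => ConnectedComponent.eq.mp
            (@Subsingleton.elim _ hsub.1 _ _), ?_⟩
          obtain ⟨d⟩ := hsub.2
          obtain ⟨v, -⟩ := d.exists_rep
          exact ⟨v⟩
        exact connected_case G H k Φ hΦ K hconn hke
      · -- disconnected case: split off the component c₀
        obtain ⟨p₀, hp₀, hp₀1, hp₀2⟩ := canonical_decomp hni c₀
        set K₁ := K.induce c₀.supp with hK₁
        set K₂ := K.induce c₀.suppᶜ with hK₂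
        have hdisjE : Disjoint p₀.1 p₀.2 := by
          rw [Set.disjoint_left]
          intro z hz1 hz2
          revert hz1 hz2
          induction z with
          | _ a b =>
              intro hz1 hz2
              have hadj : K.Adj a b := (SimpleGraph.mem_edgeSet K).mp (hp₀.1.1 hz1)
              exact (hp₀2 a ⟨b, hadj, hz2⟩) (hp₀1 a ⟨b, hadj, hz1⟩)
        have he1 : p₀.1.ncard = K₁.edgeSet.ncard := ncard_copy hp₀.1
        have he2 : p₀.2.ncard = K₂.edgeSet.ncard := ncard_copy hp₀.2.1
        have hek : K₁.edgeSet.ncard + K₂.edgeSet.ncard = K.edgeSet.ncard := by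
          rw [← he1, ← he2, ← Set.ncard_union_eq hdisjE, hp₀.2.2]
        have hksum : K₁.edgeSet.ncard + K₂.edgeSet.ncard ≤ k := by omega
        have hccK₁ : Nat.card K₁.ConnectedComponent = 1 :=
          card_cc_eq_one (connected_induce_supp c₀)
        have hccK₂ : Nat.card K₂.ConnectedComponent = c := by
          have h := card_cc_compl (K := K) c₀
          rw [← hK₂] at h
          omega
        have hni₁ := no_isolated_supp hni c₀
        have hni₂ := no_isolated_suppc hni c₀
        have hN1 : Nat.card (copies K₁ G) = Nat.card (copies K₁ H) :=
          ih _ K₁ (by omega) (by omega) hni₁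
        have hN2 : Nat.card (copies K₂ G) = Nat.card (copies K₂ H) :=
          ih _ K₂ (by omega) (by omega) hni₂
        have hsumG : ∀ U₁ U₂ : Set (Sym2 V), U₁ ∈ copies K₁ G → U₂ ∈ copies K₂ G →
            (U₁ ∪ U₂).ncard ≤ k := by
          intro U₁ U₂ h1 h2
          calc (U₁ ∪ U₂).ncard ≤ U₁.ncard + U₂.ncard := Set.ncard_union_le U₁ U₂
            _ ≤ k := by rw [ncard_copy h1, ncard_copy h2]; omega
        have hsumH : ∀ U₁ U₂ : Set (Sym2 W), U₁ ∈ copies K₁ H → U₂ ∈ copies K₂ H →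
            (U₁ ∪ U₂).ncard ≤ k := by
          intro U₁ U₂ h1 h2
          calc (U₁ ∪ U₂).ncard ≤ U₁.ncard + U₂.ncard := Set.ncard_union_le U₁ U₂
            _ ≤ k := by rw [ncard_copy h1, ncard_copy h2]; omega
        have hMG := master (G := G) (K₁ := K₁) (K₂ := K₂) (k := k) hsumG
        have hMH := master (G := H) (K₁ := K₁) (K₂ := K₂) (k := k) hsumH
        -- the distinguished class: that of K itself
        have hq₀bound : Nat.card (edgeSubgraph K K.edgeSet).verts ≤ 2 * k :=
          le_trans card_verts_le_two_mul (Nat.mul_le_mul_left 2 hke)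
        set q₀ : QGraph k := shape k K K.edgeSet with hq₀
        obtain ⟨ψfull⟩ : Nonempty ((edgeSubgraph K K.edgeSet).coe ≃g (Quotient.out q₀).2) :=
          (shape_eq_q_iff hq₀bound q₀).mp rfl
        have ψ₀ : K ≃g (Quotient.out q₀).2 := (fullIso hni).symm.trans ψfull
        -- all other terms agree
        have hterm : ∀ q : QGraph k, q ≠ q₀ →
            Nat.card (decomps K₁ K₂ (Quotient.out q).2) *
              Nat.card {S : Set (Sym2 V) //
                S ∈ copies (Quotient.out q).2 G ∧ S.ncard ≤ k}
            = Nat.card (decomps K₁ K₂ (Quotient.out q).2) *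
              Nat.card {S : Set (Sym2 W) //
                S ∈ copies (Quotient.out q).2 H ∧ S.ncard ≤ k} := by
          intro q hq
          by_cases ha : Nat.card (decomps K₁ K₂ (Quotient.out q).2) = 0
          · rw [ha, Nat.zero_mul, Nat.zero_mul]
          · obtain ⟨⟨⟨B₁, B₂⟩, hB₁, hB₂, hBu⟩⟩ : Nonempty (decomps K₁ K₂ (Quotient.out q).2) :=
              (Nat.card_ne_zero.mp ha).1
            dsimp only at hB₁ hB₂ hBu
            have hRe : (Quotient.out q).2.edgeSet.ncard ≤ k := by
              rw [← hBu]
              calc (B₁ ∪ B₂).ncard ≤ B₁.ncard + B₂.ncard := Set.ncard_union_le B₁ B₂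
                _ ≤ k := by rw [ncard_copy hB₁, ncard_copy hB₂]; omega
            by_cases hisol : ∀ x, ∃ y, (Quotient.out q).2.Adj x y
            · by_cases hmeet : ∃ x, x ∈ (edgeSubgraph (Quotient.out q).2 B₁).verts ∧
                  x ∈ (edgeSubgraph (Quotient.out q).2 B₂).verts
              · -- overlapping: apply the induction hypothesis
                have hcclt := card_cc_lt hBu hisol hmeet
                have h1 : Nat.card (edgeSubgraph (Quotient.out q).2 B₁).coe.ConnectedComponent
                    = 1 := by
                  obtain ⟨φ⟩ := hB₁.2
                  rw [Nat.card_congr φ.connectedComponentEquiv, hccK₁]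
                have h2 : Nat.card (edgeSubgraph (Quotient.out q).2 B₂).coe.ConnectedComponent
                    = c := by
                  obtain ⟨φ⟩ := hB₂.2
                  rw [Nat.card_congr φ.connectedComponentEquiv, hccK₂]
                have hcR : Nat.card (Quotient.out q).2.ConnectedComponent ≤ c := by omega
                have hrec := ih _ (Quotient.out q).2 hcR hRe hisol
                rw [card_subtype_copies hRe, card_subtype_copies hRe, hrec]
              · -- vertex-disjoint: this class is the class of K, contradiction
                exfalso
                apply hq
                have hdisj : ∀ x, ¬(x ∈ (edgeSubgraph (Quotient.out q).2 B₁).verts ∧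
                    x ∈ (edgeSubgraph (Quotient.out q).2 B₂).verts) := by
                  intro x hx
                  exact hmeet ⟨x, hx⟩
                obtain ⟨ρiso⟩ := glue_iso c₀ hisol hB₁ hB₂ hBu hdisj
                have : shape k K K.edgeSet = ⟦Quotient.out q⟧ :=
                  (shape_eq_iff hq₀bound (Quotient.out q)).mpr
                    ⟨(fullIso hni).trans ρiso.symm⟩
                rw [← hq₀] at this
                rw [this, Quotient.out_eq]
            · -- the representative has an isolated vertex: both sides are zero
              push_neg at hisol
              obtain ⟨x, hx⟩ := hisol
              have hcopG : copies (Quotient.out q).2 G = ∅ :=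
                copies_eq_empty_of_isolated ⟨x, hx⟩
              have hcopH : copies (Quotient.out q).2 H = ∅ :=
                copies_eq_empty_of_isolated ⟨x, hx⟩
              rw [card_subtype_copies hRe, card_subtype_copies hRe, hcopG, hcopH]
              have z1 : Nat.card (↥(∅ : Set (Set (Sym2 V)))) = 0 := by
                rw [Nat.card_coe_set_eq, Set.ncard_empty]
              have z2 : Nat.card (↥(∅ : Set (Set (Sym2 W)))) = 0 := by
                rw [Nat.card_coe_set_eq, Set.ncard_empty]
              rw [z1, z2]
        -- assemble
        have hq₀e : (Quotient.out q₀).2.edgeSet.ncard ≤ k := by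
          have hEq : (Quotient.out q₀).2.edgeSet.ncard = K.edgeSet.ncard := by
            rw [← Nat.card_coe_set_eq, ← Nat.card_coe_set_eq]
            exact (Nat.card_congr ψ₀.mapEdgeSet).symm
          omega
        have hsum_eq :
            ∑ q : QGraph k, Nat.card (decomps K₁ K₂ (Quotient.out q).2) *
              Nat.card {S : Set (Sym2 V) //
                S ∈ copies (Quotient.out q).2 G ∧ S.ncard ≤ k}
            = ∑ q : QGraph k, Nat.card (decomps K₁ K₂ (Quotient.out q).2) *
              Nat.card {S : Set (Sym2 W) //
                S ∈ copies (Quotient.out q).2 H ∧ S.ncard ≤ k} := by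
          rw [← hMG, ← hMH, hN1, hN2]
        have herase :
            ∑ q ∈ Finset.univ.erase q₀, Nat.card (decomps K₁ K₂ (Quotient.out q).2) *
              Nat.card {S : Set (Sym2 V) //
                S ∈ copies (Quotient.out q).2 G ∧ S.ncard ≤ k}
            = ∑ q ∈ Finset.univ.erase q₀, Nat.card (decomps K₁ K₂ (Quotient.out q).2) *
              Nat.card {S : Set (Sym2 W) //
                S ∈ copies (Quotient.out q).2 H ∧ S.ncard ≤ k} :=
          Finset.sum_congr rfl (fun q hq => hterm q (Finset.ne_of_mem_erase hq))
        have hG2 := Finset.add_sum_erase Finset.univ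
          (fun q : QGraph k => Nat.card (decomps K₁ K₂ (Quotient.out q).2) *
            Nat.card {S : Set (Sym2 V) //
              S ∈ copies (Quotient.out q).2 G ∧ S.ncard ≤ k}) (Finset.mem_univ q₀)
        have hH2 := Finset.add_sum_erase Finset.univ
          (fun q : QGraph k => Nat.card (decomps K₁ K₂ (Quotient.out q).2) *
            Nat.card {S : Set (Sym2 W) //
              S ∈ copies (Quotient.out q).2 H ∧ S.ncard ≤ k}) (Finset.mem_univ q₀)
        rw [← hG2, ← hH2, herase] at hsum_eq
        have hkey := Nat.add_right_cancel hsum_eq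
        have ha₀ : Nat.card (decomps K₁ K₂ (Quotient.out q₀).2) ≠ 0 := by
          refine Nat.card_ne_zero.mpr ⟨⟨decompsEquiv ψ₀ ⟨p₀, hp₀⟩⟩, ?_⟩
          exact (Set.toFinite _).to_subtype
        rw [card_subtype_copies hq₀e, card_subtype_copies hq₀e,
          ← copies_congr ψ₀ G, ← copies_congr ψ₀ H] at hkey
        exact Nat.eq_of_mul_eq_mul_left (Nat.pos_of_ne_zero ha₀) hkey

end MainProof

end Hop

/-- If `k ≥ 1` and `Φ` is a bijection between the vertex sets of finite simple
graphs `G` and `H` such that for every vertex `v` the `k`-hop neighborhood of `v` in `G` is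
isomorphic to the `k`-hop neighborhood of `Φ v` in `H` via an isomorphism sending `v` to `Φ v`,
then `#(K:G) = #(K:H)` for every finite simple graph `K` with at most `k` edges and no isolated
vertices. -/
theorem subgraph_count_eq_of_hop_iso {V W : Type*} [Fintype V] [Fintype W]
    (G : SimpleGraph V) (H : SimpleGraph W) (k : ℕ) (hk : 1 ≤ k) (Φ : V ≃ W)
    (hΦ : ∀ v : V,
      ∃ φ : (G.induce (_root_.ball G v k)) ≃g (H.induce (_root_.ball H (Φ v) k)),
        (φ ⟨v, mem_ball_self G v k⟩ : W) = Φ v)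
    (U : Type) [Fintype U] (K : SimpleGraph U)
    (hKedges : K.edgeSet.ncard ≤ k) (hKnoiso : ∀ u : U, ∃ w, K.Adj u w) :
    subgraphCount K G = subgraphCount K H := by
  rw [Hop.subgraphCount_eq_card, Hop.subgraphCount_eq_card]
  exact Hop.main_induction G H k Φ hΦ (Nat.card K.ConnectedComponent) U K le_rfl
    hKedges hKnoiso
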